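/- Let a : ℝ^N → ℝ be bounded continuous, symmetric (a(x) = a(−x)) and such that t ↦ a(tx) is non-increasing on (0,∞) for every x ∈ ℝ^N. Let J be a nonnegative continuous unit-mass kernel on ℝ^N and define (M_{σ,0}φ)(x) = σ^{−N} ∫_{ℝ^N} J((x−y)/σ) φ(y) dy − φ(x). Then the map σ ↦ λ_p(M_{σ,0} + a) is monotone non-decreasing on (0,∞). -/
import Mathlib

open MeasureTheory Filter Metric Set
open scoped Topology

noncomputable section

/-- Principal eigenvalue admissible set for
`M_{σ,0} φ (x) = σ^{-N} ∫_{ℝ^N} J((x−y)/σ) φ(y) dy − φ(x)` plus `a`. -/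
def lamSet0 (N : ℕ) (σ : ℝ) (J : EuclideanSpace ℝ (Fin N) → ℝ)
    (a : EuclideanSpace ℝ (Fin N) → ℝ) : Set ℝ :=
  {l | ∃ φ : EuclideanSpace ℝ (Fin N) → ℝ, Continuous φ ∧ (∀ x, 0 < φ x) ∧
    ∀ x, ((σ ^ N)⁻¹ * (∫ y, J (σ⁻¹ • (x - y)) * φ y) - φ x) + (a x + l) * φ x ≤ 0}

section aux
variable {N : ℕ}

lemma lamSet0_bddAbove (σ : ℝ) (J a : EuclideanSpace ℝ (Fin N) → ℝ)
    (hJ0 : ∀ z, 0 ≤ J z) (M : ℝ) (haM : ∀ x, |a x| ≤ M) (hσ : 0 < σ) :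
    BddAbove (lamSet0 N σ J a) := by
  refine ⟨1 + M, fun l hl => ?_⟩
  obtain ⟨φ, hc, hpos, hineq⟩ := hl
  have h := hineq 0
  have hI : 0 ≤ ∫ y, J (σ⁻¹ • ((0 : EuclideanSpace ℝ (Fin N)) - y)) * φ y :=
    integral_nonneg fun y => mul_nonneg (hJ0 _) (hpos y).le
  have hσN : (0:ℝ) < σ ^ N := pow_pos hσ N
  have h1 : (a 0 + l) * φ 0 ≤ 1 * φ 0 := by
    nlinarith [mul_nonneg (inv_nonneg.2 hσN.le) hI]
  have h2 : a 0 + l ≤ 1 := le_of_mul_le_mul_right h1 (hpos 0)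
  have := abs_le.1 (haM 0)
  linarith

lemma lamSet0_nonempty (σ : ℝ) (J a : EuclideanSpace ℝ (Fin N) → ℝ)
    (hJ1 : ∫ z, J z = 1) (M : ℝ) (haM : ∀ x, |a x| ≤ M) (hσ : 0 < σ) :
    (-M) ∈ lamSet0 N σ J a := by
  refine ⟨fun _ => 1, continuous_const, fun _ => one_pos, fun x => ?_⟩
  show ((σ ^ N)⁻¹ * (∫ y, J (σ⁻¹ • (x - y)) * 1) - 1) + (a x + -M) * 1 ≤ 0
  have key : ∫ y, J (σ⁻¹ • (x - y)) * 1 = σ ^ N := by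
    simp only [mul_one]
    have h1 : ∫ y, J (σ⁻¹ • (x - y)) = ∫ y, J (σ⁻¹ • y) :=
      integral_sub_left_eq_self (fun y => J (σ⁻¹ • y)) volume x
    have h2 := Measure.integral_comp_inv_smul_of_nonneg volume J hσ.le
    rw [finrank_euclideanSpace_fin] at h2
    rw [h1, h2, hJ1, smul_eq_mul, mul_one]
  rw [key, mul_one, inv_mul_cancel₀ (pow_pos hσ N).ne']
  have := abs_le.1 (haM x)
  linarith

lemma lamSet0_subset (σ₁ σ₂ : ℝ) (J a : EuclideanSpace ℝ (Fin N) → ℝ)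
    (hmono : ∀ (x : EuclideanSpace ℝ (Fin N)) (t₁ t₂ : ℝ),
      0 < t₁ → t₁ ≤ t₂ → a (t₂ • x) ≤ a (t₁ • x))
    (h1 : 0 < σ₁) (h12 : σ₁ ≤ σ₂) :
    lamSet0 N σ₁ J a ⊆ lamSet0 N σ₂ J a := by
  intro l hl
  obtain ⟨φ, hc, hpos, hineq⟩ := hl
  have h2 : (0:ℝ) < σ₂ := h1.trans_le h12
  set c : ℝ := σ₁ / σ₂ with hcdef
  have hc0 : 0 < c := div_pos h1 h2
  have hc1 : c ≤ 1 := (div_le_one h2).2 h12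
  set d : ℝ := σ₂ / σ₁ with hddef
  have hd0 : 0 < d := div_pos h2 h1
  have hcd : c * d = 1 := by rw [hcdef, hddef]; field_simp
  refine ⟨fun x => φ (c • x), hc.comp (continuous_const_smul c), fun x => hpos _, fun x => ?_⟩
  show ((σ₂ ^ N)⁻¹ * (∫ y, J (σ₂⁻¹ • (x - y)) * φ (c • y)) - φ (c • x))
      + (a x + l) * φ (c • x) ≤ 0
  set X : EuclideanSpace ℝ (Fin N) := c • x with hXdef
  have keyint : (σ₂ ^ N)⁻¹ * (∫ y, J (σ₂⁻¹ • (x - y)) * φ (c • y))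
      = (σ₁ ^ N)⁻¹ * (∫ y, J (σ₁⁻¹ • (X - y)) * φ y) := by
    have hsub : ∀ u : EuclideanSpace ℝ (Fin N),
        J (σ₂⁻¹ • (x - d • u)) * φ (c • d • u) = J (σ₁⁻¹ • (X - u)) * φ u := by
      intro u
      have e1 : σ₂⁻¹ * d = σ₁⁻¹ := by rw [hddef]; field_simp
      have e2 : σ₁⁻¹ * c = σ₂⁻¹ := by rw [hcdef]; field_simp
      have hv : σ₂⁻¹ • (x - d • u) = σ₁⁻¹ • (X - u) := by
        rw [smul_sub, smul_sub, smul_smul, smul_smul, e1, e2]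
      rw [hv, smul_smul, hcd, one_smul]
    have hcomp : ∫ u, J (σ₁⁻¹ • (X - u)) * φ u
        = (d ^ N)⁻¹ • ∫ y, J (σ₂⁻¹ • (x - y)) * φ (c • y) := by
      calc ∫ u, J (σ₁⁻¹ • (X - u)) * φ u
          = ∫ u, J (σ₂⁻¹ • (x - d • u)) * φ (c • d • u) := by
            congr 1; ext u; rw [hsub u]
        _ = (d ^ N)⁻¹ • ∫ y, J (σ₂⁻¹ • (x - y)) * φ (c • y) := by
            have h3 := Measure.integral_comp_smul_of_nonneg volume
              (fun y => J (σ₂⁻¹ • (x - y)) * φ (c • y)) d (hR := hd0.le)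
            rw [finrank_euclideanSpace_fin] at h3
            exact h3
    rw [hcomp, smul_eq_mul]
    rw [← mul_assoc]
    congr 1
    rw [hddef, div_pow]
    field_simp
  rw [keyint]
  have haX : a x ≤ a X := by
    have := hmono x c 1 hc0 hc1
    rwa [one_smul] at this
  have hX := hineq X
  nlinarith [hpos X]

end aux

/-- If `a` is bounded continuous, symmetric and radially non-increasing,
then `σ ↦ λ_p(M_{σ,0} + a)` is monotone non-decreasing on `(0,∞)`. -/
theorem stmt14 (N : ℕ)
    (J : EuclideanSpace ℝ (Fin N) → ℝ)
    (hJc : Continuous J) (hJ0 : ∀ z, 0 ≤ J z)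
    (hJi : Integrable J) (hJ1 : ∫ z, J z = 1)
    (a : EuclideanSpace ℝ (Fin N) → ℝ)
    (hac : Continuous a) (haB : ∃ M, ∀ x, |a x| ≤ M)
    (hsymm : ∀ x, a (-x) = a x)
    (hmono : ∀ (x : EuclideanSpace ℝ (Fin N)) (t₁ t₂ : ℝ),
      0 < t₁ → t₁ ≤ t₂ → a (t₂ • x) ≤ a (t₁ • x)) :
    ∀ σ₁ σ₂ : ℝ, 0 < σ₁ → σ₁ ≤ σ₂ →
      sSup (lamSet0 N σ₁ J a) ≤ sSup (lamSet0 N σ₂ J a) := by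
  intro σ₁ σ₂ h1 h12
  obtain ⟨M, haM⟩ := haB
  exact csSup_le_csSup
    (lamSet0_bddAbove σ₂ J a hJ0 M haM (h1.trans_le h12))
    ⟨-M, lamSet0_nonempty σ₁ J a hJ1 M haM h1⟩
    (lamSet0_subset σ₁ σ₂ J a hmono h1 h12)
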